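/- Let P(z) = α + βz + γz² + δz³ + εz⁴ be a polynomial of degree 4 with real coefficients α, β, γ, δ, ε and ε > 0. Then all complex roots of P lie in the open half-plane {z ∈ ℂ : Re z < 1/2} if and only if P(1/2) > 0, P'(1/2) > 0, P''(1/2) > 0, and Δ₃ := (ε + δ + γ + β)[(ε + δ + γ)(ε + δ) − εβ] − (2ε + δ)²α > 0. -/

import Mathlib

lemma cubic_nonneg_root (A B C : ℝ) (hC : C ≤ 0) :
    ∃ t : ℝ, 0 ≤ t ∧ t^3 + A*t^2 + B*t + C = 0 := by
  set M := 1 + |A| + |B| + |C| with hM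
  have hM1 : 1 ≤ M := by
    have := abs_nonneg A; have := abs_nonneg B; have := abs_nonneg C; linarith
  have hM0 : (0:ℝ) ≤ M := by linarith
  have hfM : 0 ≤ M^3 + A*M^2 + B*M + C := by
    nlinarith [neg_abs_le A, neg_abs_le B, neg_abs_le C, sq_nonneg M,
      abs_nonneg A, abs_nonneg B, abs_nonneg C,
      mul_le_mul_of_nonneg_left hM1 (abs_nonneg B),
      mul_le_mul_of_nonneg_left hM1 (abs_nonneg C)]
  have hcont : ContinuousOn (fun t : ℝ => t^3 + A*t^2 + B*t + C) (Set.Icc 0 M) := by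
    fun_prop
  have hmem : (0:ℝ) ∈ Set.Icc ((fun t : ℝ => t^3 + A*t^2 + B*t + C) 0)
      ((fun t : ℝ => t^3 + A*t^2 + B*t + C) M) := by
    constructor <;> simp <;> nlinarith
  obtain ⟨t, htI, htz⟩ := intermediate_value_Icc hM0 hcont hmem
  exact ⟨t, htI.1, htz⟩


lemma depressed_factor (p q r : ℝ) :
    ∃ s u v : ℝ, u + v - s^2 = p ∧ s*(v-u) = q ∧ u*v = r := by
  by_cases hq : q = 0
  · rcases le_or_gt 0 (p^2 - 4*r) with hd | hd
    · refine ⟨0, (p - Real.sqrt (p^2-4*r))/2, (p + Real.sqrt (p^2-4*r))/2, by ring, by simp [hq], ?_⟩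
      have h := Real.sq_sqrt hd
      nlinarith [h]
    · have hr : 0 < r := by nlinarith [sq_nonneg p]
      have hsr := Real.sq_sqrt hr.le
      have hsn := Real.sqrt_nonneg r
      have h2 : 0 ≤ 2*Real.sqrt r - p := by nlinarith
      refine ⟨Real.sqrt (2*Real.sqrt r - p), Real.sqrt r, Real.sqrt r, ?_, by simp [hq], ?_⟩
      · rw [Real.sq_sqrt h2]; ring
      · nlinarith
  · obtain ⟨t, ht0, htz⟩ := cubic_nonneg_root (2*p) (p^2-4*r) (-q^2) (by nlinarith [sq_nonneg q])
    have htpos : 0 < t := by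
      rcases ht0.lt_or_eq with h | h
      · exact h
      · exfalso; rw [← h] at htz; simp at htz; exact hq htz
    set s := Real.sqrt t with hs
    have hs2 : s^2 = t := Real.sq_sqrt ht0
    have hspos : 0 < s := Real.sqrt_pos.mpr htpos
    refine ⟨s, (p + t - q/s)/2, (p + t + q/s)/2, by rw [hs2]; ring, ?_, ?_⟩
    · field_simp; ring
    · field_simp
      nlinarith [htz, hs2, sq_nonneg s]

lemma quartic_factor (a b c d : ℝ) : ∃ p1 q1 p2 q2 : ℝ,
    p1 + p2 = a ∧ q1 + q2 + p1*p2 = b ∧ p1*q2 + p2*q1 = c ∧ q1*q2 = d := by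
  obtain ⟨s, u, v, h1, h2, h3⟩ := depressed_factor (b - 3*a^2/8) (c - a*b/2 + a^3/8)
    (d - a*c/4 + a^2*b/16 - 3*a^4/256)
  refine ⟨a/2 + s, a^2/16 + s*a/4 + u, a/2 - s, a^2/16 - s*a/4 + v, by ring, ?_, ?_, ?_⟩
  · linear_combination h1
  · linear_combination (a/2) * h1 + h2
  · linear_combination (a^2/16) * h1 + (a/4) * h2 + h3


lemma quad_stable (p q : ℝ) :
    (∀ z : ℂ, z^2 + (p:ℂ)*z + (q:ℂ) = 0 → z.re < 0) ↔ 0 < p ∧ 0 < q := by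
  constructor
  · intro h
    rcases le_or_gt 0 (p^2 - 4*q) with hd | hd
    · set e := Real.sqrt (p^2 - 4*q) with he
      have he2 : e^2 = p^2 - 4*q := Real.sq_sqrt hd
      have hx1 : ((((-p+e)/2 : ℝ)):ℂ)^2 + (p:ℂ)*(((-p+e)/2 : ℝ):ℂ) + (q:ℂ) = 0 := by
        have : ((-p+e)/2)^2 + p*((-p+e)/2) + q = 0 := by nlinarith [he2]
        exact_mod_cast this
      have hx2 : ((((-p-e)/2 : ℝ)):ℂ)^2 + (p:ℂ)*(((-p-e)/2 : ℝ):ℂ) + (q:ℂ) = 0 := by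
        have : ((-p-e)/2)^2 + p*((-p-e)/2) + q = 0 := by nlinarith [he2]
        exact_mod_cast this
      have h1 := h _ hx1
      have h2 := h _ hx2
      rw [Complex.ofReal_re] at h1 h2
      constructor
      · nlinarith
      · nlinarith [he2]
    · set e := Real.sqrt (4*q - p^2) with he
      have he2 : e^2 = 4*q - p^2 := Real.sq_sqrt (by linarith)
      have hz : ((-(p:ℂ) + (e:ℂ)*Complex.I)/2)^2 + (p:ℂ)*((-(p:ℂ) + (e:ℂ)*Complex.I)/2) + (q:ℂ) = 0 := by
        have hc : (e:ℂ)^2 = 4*(q:ℂ) - (p:ℂ)^2 := by exact_mod_cast he2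
        linear_combination ((e:ℂ)^2/4) * Complex.I_sq - (1/4:ℂ) * hc
      have h1 := h _ hz
      have : ((-(p:ℂ) + (e:ℂ)*Complex.I)/2).re = -p/2 := by
        simp [Complex.add_re, Complex.div_re, Complex.mul_re]
      rw [this] at h1
      constructor
      · linarith
      · nlinarith [sq_nonneg p]
  · rintro ⟨hp, hq⟩ z hz
    by_contra hcon
    push_neg at hcon
    have hre := congrArg Complex.re hz
    have him := congrArg Complex.im hz
    rw [show z^2 = z*z by ring] at hre him
    simp [Complex.add_re, Complex.add_im, Complex.mul_re, Complex.mul_im] at hre him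
    have hy : z.im * (2*z.re + p) = 0 := by linarith [him]
    rcases mul_eq_zero.mp hy with h0 | h0
    · rw [h0] at hre
      nlinarith [hre, hcon, hp, hq]
    · nlinarith [hcon, hp, h0]


lemma quartic_stable (a b c d : ℝ) :
    (∀ z : ℂ, z^4 + (a:ℂ)*z^3 + (b:ℂ)*z^2 + (c:ℂ)*z + (d:ℂ) = 0 → z.re < 0) ↔
      (0 < d ∧ 0 < c ∧ 0 < b ∧ 0 < a*b*c - c^2 - a^2*d) := by
  obtain ⟨p1, q1, p2, q2, ha, hb, hc, hd⟩ := quartic_factor a b c d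
  have haC : ((p1:ℂ) + p2 = (a:ℂ)) := by exact_mod_cast ha
  have hbC : ((q1:ℂ) + q2 + p1*p2 = (b:ℂ)) := by exact_mod_cast hb
  have hcC : ((p1:ℂ)*q2 + p2*q1 = (c:ℂ)) := by exact_mod_cast hc
  have hdC : ((q1:ℂ)*q2 = (d:ℂ)) := by exact_mod_cast hd
  have hfac : ∀ z : ℂ, z^4 + (a:ℂ)*z^3 + (b:ℂ)*z^2 + (c:ℂ)*z + (d:ℂ)
      = (z^2 + (p1:ℂ)*z + (q1:ℂ)) * (z^2 + (p2:ℂ)*z + (q2:ℂ)) := by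
    intro z
    linear_combination (z^3) * haC.symm + (z^2) * hbC.symm + z * hcC.symm + hdC.symm
  have hiff : (∀ z : ℂ, z^4 + (a:ℂ)*z^3 + (b:ℂ)*z^2 + (c:ℂ)*z + (d:ℂ) = 0 → z.re < 0) ↔
      ((0 < p1 ∧ 0 < q1) ∧ (0 < p2 ∧ 0 < q2)) := by
    rw [← quad_stable p1 q1, ← quad_stable p2 q2]
    constructor
    · intro h
      constructor
      · intro z hz; exact h z (by rw [hfac z, hz, zero_mul])
      · intro z hz; exact h z (by rw [hfac z, hz, mul_zero])
    · rintro ⟨h1, h2⟩ z hz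
      rw [hfac z] at hz
      rcases mul_eq_zero.mp hz with h | h
      · exact h1 z h
      · exact h2 z h
  rw [hiff]
  subst ha hb hc hd
  constructor
  · rintro ⟨⟨hp1, hq1⟩, hp2, hq2⟩
    refine ⟨by positivity, by positivity, by positivity, ?_⟩
    nlinarith [sq_nonneg (q1 - q2), mul_pos hp1 hp2, mul_pos hp1 hq2, mul_pos hp2 hq1,
      mul_pos (mul_pos hp1 hp2) (mul_pos hp1 hq2), mul_pos (mul_pos hp1 hp2) (mul_pos hp2 hq1)]
  · rintro ⟨hd, hc, hb, hΔ⟩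
    have hid : (p1+p2)*(q1+q2+p1*p2)*(p1*q2+p2*q1) - (p1*q2+p2*q1)^2 - (p1+p2)^2*(q1*q2)
        = p1*p2*((q1-q2)^2 + (p1+p2)*(p1*q2+p2*q1)) := by ring
    have ha : 0 < p1 + p2 := by
      by_contra h
      push_neg at h
      nlinarith [mul_pos hb hc, sq_nonneg (p1+p2), mul_nonneg (mul_nonneg (neg_nonneg.mpr h) hb.le) hc.le,
        mul_nonneg (sq_nonneg (p1+p2)) hd.le]
    have hK : 0 < (q1-q2)^2 + (p1+p2)*(p1*q2+p2*q1) := by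
      nlinarith [sq_nonneg (q1-q2), mul_pos ha hc]
    have hp12 : 0 < p1*p2 := by
      by_contra h
      push_neg at h
      nlinarith [mul_nonpos_of_nonpos_of_nonneg h hK.le]
    have hp1 : 0 < p1 := by nlinarith
    have hp2 : 0 < p2 := by nlinarith
    have hq1 : 0 < q1 := by
      by_contra h
      push_neg at h
      have hq1n : q1 < 0 := by
        rcases h.lt_or_eq with h' | h'
        · exact h'
        · rw [h'] at hd; simp at hd
      have hq2n : q2 < 0 := by nlinarith
      nlinarith [mul_pos hp1 (neg_pos.mpr hq2n), mul_pos hp2 (neg_pos.mpr hq1n)]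
    have hq2 : 0 < q2 := by nlinarith
    exact ⟨⟨hp1, hq1⟩, hp2, hq2⟩



set_option maxHeartbeats 1000000 in
/-- Routh–Hurwitz type criterion in degree 4: all complex roots of
`α + β z + γ z² + δ z³ + ε z⁴` (real coefficients, `ε > 0`) lie in
`{Re z < 1/2}` iff `P(1/2) > 0`, `P'(1/2) > 0`, `P''(1/2) > 0` and
`Δ₃ = (ε+δ+γ+β)[(ε+δ+γ)(ε+δ) - εβ] - (2ε+δ)²α > 0`. -/
theorem degree_four_roots_in_half_plane (α β γ δ ε : ℝ) (hε : 0 < ε) :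
    (∀ z : ℂ, (α : ℂ) + (β : ℂ) * z + (γ : ℂ) * z ^ 2 + (δ : ℂ) * z ^ 3 +
        (ε : ℂ) * z ^ 4 = 0 → z.re < 1 / 2) ↔
      (0 < α + β * (1 / 2) + γ * (1 / 2) ^ 2 + δ * (1 / 2) ^ 3 + ε * (1 / 2) ^ 4 ∧
        0 < deriv (fun x : ℝ => α + β * x + γ * x ^ 2 + δ * x ^ 3 + ε * x ^ 4) (1 / 2) ∧
        0 < deriv (deriv (fun x : ℝ => α + β * x + γ * x ^ 2 + δ * x ^ 3 + ε * x ^ 4)) (1 / 2) ∧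
        0 < (ε + δ + γ + β) * ((ε + δ + γ) * (ε + δ) - ε * β) - (2 * ε + δ) ^ 2 * α) := by
  have hεC : (ε:ℂ) ≠ 0 := Complex.ofReal_ne_zero.mpr hε.ne'
  obtain ⟨aa, haa⟩ : ∃ aa : ℝ, ε * aa = δ + 2*ε := ⟨(δ + 2*ε)/ε, by field_simp <;> ring⟩
  obtain ⟨bb, hbb⟩ : ∃ bb : ℝ, 2*ε * bb = 2*γ + 3*δ + 3*ε :=
    ⟨(2*γ + 3*δ + 3*ε)/(2*ε), by field_simp <;> ring⟩
  obtain ⟨cc, hcc⟩ : ∃ cc : ℝ, ε * cc = β + γ + 3*δ/4 + ε/2 :=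
    ⟨(β + γ + 3*δ/4 + ε/2)/ε, by field_simp <;> ring⟩
  obtain ⟨dd, hdd⟩ : ∃ dd : ℝ, ε * dd = α + β/2 + γ/4 + δ/8 + ε/16 :=
    ⟨(α + β/2 + γ/4 + δ/8 + ε/16)/ε, by field_simp <;> ring⟩
  have E1 : (ε:ℂ) * (aa:ℂ) = (δ:ℂ) + 2*(ε:ℂ) := by exact_mod_cast haa
  have E2 : 2*(ε:ℂ) * (bb:ℂ) = 2*(γ:ℂ) + 3*(δ:ℂ) + 3*(ε:ℂ) := by exact_mod_cast hbb
  have E3 : (ε:ℂ) * (cc:ℂ) = (β:ℂ) + (γ:ℂ) + 3*(δ:ℂ)/4 + (ε:ℂ)/2 := by exact_mod_cast hcc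
  have E4 : (ε:ℂ) * (dd:ℂ) = (α:ℂ) + (β:ℂ)/2 + (γ:ℂ)/4 + (δ:ℂ)/8 + (ε:ℂ)/16 := by
    exact_mod_cast hdd
  have hident : ∀ z : ℂ, (α : ℂ) + (β : ℂ) * z + (γ : ℂ) * z ^ 2 + (δ : ℂ) * z ^ 3 +
      (ε : ℂ) * z ^ 4 = (ε:ℂ) * ((z - 1/2)^4 + (aa:ℂ)*(z - 1/2)^3 + (bb:ℂ)*(z - 1/2)^2
        + (cc:ℂ)*(z - 1/2) + (dd:ℂ)) := by
    intro z
    linear_combination (-(z - 1/2)^3) * E1 + (-(z - 1/2)^2/2) * E2 + (-(z - 1/2)) * E3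
      + (-1:ℂ) * E4
  -- derivatives
  have Hf : ∀ x : ℝ, HasDerivAt (fun x : ℝ => α + β * x + γ * x ^ 2 + δ * x ^ 3 + ε * x ^ 4)
      (β + 2*γ*x + 3*δ*x^2 + 4*ε*x^3) x := by
    intro x
    have h := (((((hasDerivAt_const x α).add ((hasDerivAt_id x).const_mul β)).add
      ((hasDerivAt_pow 2 x).const_mul γ)).add
      ((hasDerivAt_pow 3 x).const_mul δ)).add
      ((hasDerivAt_pow 4 x).const_mul ε))
    exact h.congr_deriv (by push_cast; ring)
  have Hg : ∀ x : ℝ, HasDerivAt (fun x : ℝ => β + 2*γ*x + 3*δ*x^2 + 4*ε*x^3)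
      (2*γ + 6*δ*x + 12*ε*x^2) x := by
    intro x
    have h := ((((hasDerivAt_const x β).add ((hasDerivAt_id x).const_mul (2*γ))).add
      ((hasDerivAt_pow 2 x).const_mul (3*δ))).add
      ((hasDerivAt_pow 3 x).const_mul (4*ε)))
    exact h.congr_deriv (by push_cast; ring)
  have d1 : deriv (fun x : ℝ => α + β * x + γ * x ^ 2 + δ * x ^ 3 + ε * x ^ 4)
      = fun x : ℝ => β + 2*γ*x + 3*δ*x^2 + 4*ε*x^3 := funext fun x => (Hf x).deriv
  have d2 : deriv (deriv (fun x : ℝ => α + β * x + γ * x ^ 2 + δ * x ^ 3 + ε * x ^ 4)) (1/2)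
      = 2*γ + 6*δ*(1/2) + 12*ε*(1/2)^2 := by
    rw [d1]; exact (Hg (1/2)).deriv
  have d1' : deriv (fun x : ℝ => α + β * x + γ * x ^ 2 + δ * x ^ 3 + ε * x ^ 4) (1/2)
      = β + 2*γ*(1/2) + 3*δ*(1/2)^2 + 4*ε*(1/2)^3 := by rw [d1]
  have h12 : (1/2 : ℂ).re = 1/2 := by norm_num
  have hmain : (∀ z : ℂ, (α : ℂ) + (β : ℂ) * z + (γ : ℂ) * z ^ 2 + (δ : ℂ) * z ^ 3 +
      (ε : ℂ) * z ^ 4 = 0 → z.re < 1 / 2) ↔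
      (∀ w : ℂ, w^4 + (aa:ℂ)*w^3 + (bb:ℂ)*w^2 + (cc:ℂ)*w + (dd:ℂ) = 0 → w.re < 0) := by
    constructor
    · intro h w hw
      have h2 := h (w + 1/2) (by
        rw [hident (w + 1/2)]
        have hww : (w + 1/2 - 1/2 : ℂ) = w := by ring
        rw [hww, hw, mul_zero])
      have hre : (w + (1/2:ℂ)).re = w.re + 1/2 := by rw [Complex.add_re, h12]
      rw [hre] at h2
      linarith
    · intro h z hz
      rw [hident z] at hz
      have h2 := h (z - 1/2) ((mul_eq_zero.mp hz).resolve_left hεC)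
      have hre : (z - (1/2:ℂ)).re = z.re - 1/2 := by rw [Complex.sub_re, h12]
      rw [hre] at h2
      linarith
  rw [hmain, quartic_stable aa bb cc dd, d1', d2]
  have haa' : aa = (δ + 2*ε)/ε := by rw [eq_div_iff hε.ne']; linarith
  have hbb' : bb = (2*γ + 3*δ + 3*ε)/(2*ε) := by
    rw [eq_div_iff (by linarith : (2*ε) ≠ 0)]; linarith
  have hcc' : cc = (β + γ + 3*δ/4 + ε/2)/ε := by rw [eq_div_iff hε.ne']; linarith
  have hdd' : dd = (α + β/2 + γ/4 + δ/8 + ε/16)/ε := by rw [eq_div_iff hε.ne']; linarith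
  have hΔ : (aa*bb*cc - cc^2 - aa^2*dd) * ε^3
      = (ε + δ + γ + β) * ((ε + δ + γ) * (ε + δ) - ε * β) - (2 * ε + δ) ^ 2 * α := by
    rw [haa', hbb', hcc', hdd']
    field_simp
    ring
  have hε3 := pow_pos hε 3
  constructor
  · rintro ⟨h1, h2, h3, h4⟩
    refine ⟨by nlinarith [mul_pos hε h1], by nlinarith [mul_pos hε h2],
      by nlinarith [mul_pos (by linarith : (0:ℝ) < 2*ε) h3], ?_⟩
    rw [← hΔ]
    exact mul_pos h4 hε3
  · rintro ⟨h1, h2, h3, h4⟩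
    rw [← hΔ] at h4
    refine ⟨?_, ?_, ?_, ?_⟩
    · nlinarith [haa]
    · nlinarith [hcc]
    · nlinarith [hbb]
    · nlinarith [h4, hε3]
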